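/- Let G be a DAG with single source and single sink, and suppose ⟨s, e⟩ and ⟨s, e'⟩ are both superbubbles (without the minimality condition) with ordD[s] < ordD[e'] < ordD[e] for a DFS topological ordering ordD whose vertex-interval property holds (the vertices of any superbubble occupy exactly the ordD-interval between entrance and exit). Then ⟨e', e⟩ also satisfies the reachability, matching, and acyclicity conditions of a superbubble. -/

import Mathlib

/-- `v` is reachable from `s` by a directed path whose internal vertices
(all vertices except the endpoints) avoid `avoid`. -/
def ReachWithout {V : Type*} (E : V → V → Prop) (avoid s v : V) : Prop :=
  s = v ∨ ∃ w, Relation.ReflTransGen (fun a b => E a b ∧ b ≠ avoid) s w ∧ E w v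

/-- `t` is reachable from `v` by a directed path whose internal vertices avoid `avoid`. -/
def CoReachWithout {V : Type*} (E : V → V → Prop) (avoid v t : V) : Prop :=
  v = t ∨ ∃ w, E v w ∧ Relation.ReflTransGen (fun a b => E a b ∧ a ≠ avoid) w t

/-- The subgraph induced by `U` is acyclic. -/
def AcyclicOn {V : Type*} (E : V → V → Prop) (U : Set V) : Prop :=
  ∀ v, ¬ Relation.TransGen (fun a b => E a b ∧ a ∈ U ∧ b ∈ U) v v

/-- The directed graph is acyclic. -/
def Acyclic {V : Type*} (E : V → V → Prop) : Prop :=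
  ∀ v, ¬ Relation.TransGen E v v

/-- The reachability, matching and acyclicity conditions of a superbubble
(Definition 1, without minimality). -/
def SBCore {V : Type*} (E : V → V → Prop) (s t : V) : Prop :=
  s ≠ t ∧ Relation.TransGen E s t ∧
  (∀ v, ReachWithout E t s v ↔ CoReachWithout E s v t) ∧
  AcyclicOn E {v | ReachWithout E t s v}

/-- `⟨s, t⟩` is a superbubble: reachability, matching, acyclicity and minimality. -/
def Superbubble {V : Type*} (E : V → V → Prop) (s t : V) : Prop :=
  SBCore E s t ∧ ∀ t', ReachWithout E t s t' → t' ≠ t → ¬ SBCore E s t'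

section helpers

variable {V : Type*} {E : V → V → Prop}

private lemma reachWithout_of_rtg {t s v : V}
    (h : Relation.ReflTransGen (fun a b => E a b ∧ b ≠ t) s v) :
    ReachWithout E t s v := by
  rcases h.cases_tail with rfl | ⟨w, hw, he⟩
  · exact Or.inl rfl
  · exact Or.inr ⟨w, hw, he.1⟩

private lemma rtg_of_reachWithout {t s v : V} (h : ReachWithout E t s v) (hv : v ≠ t) :
    Relation.ReflTransGen (fun a b => E a b ∧ b ≠ t) s v := by
  rcases h with rfl | ⟨w, hw, he⟩
  · rfl
  · exact hw.tail ⟨he, hv⟩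

private lemma coReachWithout_of_rtg {s v t : V}
    (h : Relation.ReflTransGen (fun a b => E a b ∧ a ≠ s) v t) :
    CoReachWithout E s v t := by
  rcases h.cases_head with rfl | ⟨w, hw, he⟩
  · exact Or.inl rfl
  · exact Or.inr ⟨w, hw.1, he⟩

private lemma rtg_of_coReachWithout {s v t : V} (h : CoReachWithout E s v t) (hv : v ≠ s) :
    Relation.ReflTransGen (fun a b => E a b ∧ a ≠ s) v t := by
  rcases h with rfl | ⟨w, hw, he⟩
  · rfl
  · exact Relation.ReflTransGen.head ⟨hw, hv⟩ he

private lemma ord_le_of_rtg {ordD : V → ℕ} (htopo : ∀ a b, E a b → ordD a < ordD b)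
    {r : V → V → Prop} (hr : ∀ a b, r a b → E a b) {a b : V}
    (h : Relation.ReflTransGen r a b) : ordD a ≤ ordD b := by
  induction h with
  | refl => exact le_rfl
  | tail _ h₂ ih => exact ih.trans (htopo _ _ (hr _ _ h₂)).le

private lemma rtg_liftFst {ordD : V → ℕ} (htopo : ∀ a b, E a b → ordD a < ordD b)
    {t a b : V} (ha : ordD t < ordD a) (h : Relation.ReflTransGen E a b) :
    Relation.ReflTransGen (fun x y => E x y ∧ x ≠ t) a b := by
  revert ha
  induction h using Relation.ReflTransGen.head_induction_on with
  | refl => intro _; rfl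
  | head h' _ ih =>
    intro ha
    exact Relation.ReflTransGen.head ⟨h', fun he => lt_irrefl _ (he ▸ ha)⟩
      (ih (ha.trans (htopo _ _ h')))

end helpers

/-- If ⟨s, e⟩ and ⟨s, e'⟩ both satisfy the reachability, matching and acyclicity
conditions of a superbubble, with ordD s < ordD e' < ordD e, in a single-source
single-sink DAG whose topological ordering has the interval property (the vertex set
of any such pair is exactly the order interval between its endpoints), then ⟨e', e⟩
also satisfies the reachability, matching and acyclicity conditions. -/
theorem nested_superbubble_core {V : Type*} [Fintype V] (E : V → V → Prop)
    (hA : Acyclic E)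
    (hSource : ∃! r : V, ∀ u, ¬ E u r)
    (hSink : ∃! q : V, ∀ u, ¬ E q u)
    (ordD : V → ℕ) (hinj : Function.Injective ordD)
    (htopo : ∀ a b, E a b → ordD a < ordD b)
    (hInterval : ∀ a b : V, SBCore E a b →
      {v : V | ReachWithout E b a v} = {v : V | ordD a ≤ ordD v ∧ ordD v ≤ ordD b})
    (s e e' : V)
    (h1 : SBCore E s e) (h2 : SBCore E s e')
    (ho1 : ordD s < ordD e') (ho2 : ordD e' < ordD e) :
    SBCore E e' e := by
  obtain ⟨hse, hTse, hM1, _⟩ := h1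
  obtain ⟨hse', hTse', hM2, _⟩ := h2
  have hU : ∀ v, ReachWithout E e s v ↔ (ordD s ≤ ordD v ∧ ordD v ≤ ordD e) :=
    fun v => Set.ext_iff.mp (hInterval s e ⟨hse, hTse, hM1, by
      intro x hx; exact hA x (Relation.TransGen.mono (fun a b hab => hab.1) _ _ hx)⟩) v
  have hU' : ∀ v, ReachWithout E e' s v ↔ (ordD s ≤ ordD v ∧ ordD v ≤ ordD e') :=
    fun v => Set.ext_iff.mp (hInterval s e' ⟨hse', hTse', hM2, by
      intro x hx; exact hA x (Relation.TransGen.mono (fun a b hab => hab.1) _ _ hx)⟩) v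
  have hne'e : e' ≠ e := fun h => lt_irrefl _ (h ▸ ho2)
  have he'U' : ReachWithout E e' s e' := (hU' e').mpr ⟨ho1.le, le_rfl⟩
  have heU : ReachWithout E e s e := (hU e).mpr ⟨(ho1.trans ho2).le, le_rfl⟩
  have he'U : ReachWithout E e s e' := (hU e').mpr ⟨ho1.le, ho2.le⟩
  -- closure: successors of a vertex of U' other than e' stay in U'
  have clU' : ∀ a b, ReachWithout E e' s a → a ≠ e' → E a b → ReachWithout E e' s b := by
    intro a b ha hne hab
    by_cases hb : b = e'
    · exact hb ▸ he'U'
    · exact reachWithout_of_rtg ((rtg_of_reachWithout ha hne).tail ⟨hab, hb⟩)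
  -- closure: successors of a vertex of U other than e stay in U
  have clU : ∀ a b, ReachWithout E e s a → a ≠ e → E a b → ReachWithout E e s b := by
    intro a b ha hne hab
    by_cases hb : b = e
    · exact hb ▸ heU
    · exact reachWithout_of_rtg ((rtg_of_reachWithout ha hne).tail ⟨hab, hb⟩)
  -- co-closure: predecessors of a vertex of U stay in U
  have coclU : ∀ a b, ReachWithout E e s b → b ≠ s → E a b → ReachWithout E e s a := by
    intro a b hb hbs hab
    by_cases has : a = s
    · exact has ▸ (Or.inl rfl)
    · refine (hM1 a).mpr (coReachWithout_of_rtg ?_)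
      exact Relation.ReflTransGen.head ⟨hab, has⟩ (rtg_of_coReachWithout ((hM1 b).mp hb) hbs)
  -- e is reachable from e'
  have hTe'e : Relation.TransGen E e' e := by
    rcases (hM1 e').mp he'U with h | ⟨w, hw, hrt⟩
    · exact absurd h hne'e
    · exact Relation.TransGen.head' hw (Relation.ReflTransGen.mono (fun a b hab => hab.1) _ _ hrt)
  -- L1 : no path from inside U' to e avoiding e' internally
  have L1 : ∀ x, Relation.ReflTransGen (fun a b => E a b ∧ a ≠ e') x e →
      ReachWithout E e' s x → False := by
    intro x hr
    induction hr using Relation.ReflTransGen.head_induction_on with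
    | refl => intro hx; exact absurd ((hU' e).mp hx).2 (not_le.mpr ho2)
    | head h' _ ih => intro hx; exact ih (clU' _ _ hx h'.2 h'.1)
  -- L2 : anything that reaches e avoiding e' internally lies in U
  have L2 : ∀ x, Relation.ReflTransGen (fun a b => E a b ∧ a ≠ e') x e →
      ReachWithout E e s x := by
    intro x hr
    induction hr using Relation.ReflTransGen.head_induction_on with
    | refl => exact heU
    | head h' hrest ih =>
      rename_i a c
      by_cases hcs : c = s
      · exact (L1 c hrest (hcs ▸ (Or.inl rfl))).elim
      · exact coclU _ _ ih hcs h'.1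
  -- L3 : any path from s avoiding e either stays in U' or passes through e'
  have L3 : ∀ w, Relation.ReflTransGen (fun a b => E a b ∧ b ≠ e) s w →
      ReachWithout E e' s w ∨ Relation.ReflTransGen (fun a b => E a b ∧ b ≠ e) e' w := by
    intro w hr
    induction hr with
    | refl => exact Or.inl (Or.inl rfl)
    | tail _ h' ih =>
      rcases ih with ha | ha
      · rename_i a b _
        by_cases hae : a = e'
        · exact Or.inr (hae ▸ Relation.ReflTransGen.single h')
        · exact Or.inl (clU' a b ha hae h'.1)
      · exact Or.inr (ha.tail h')
  -- vertices of U above e' are reachable from e' avoiding e internally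
  have hR : ∀ v, ReachWithout E e s v → ordD e' ≤ ordD v → ReachWithout E e e' v := by
    intro v hv hov
    by_cases hve' : v = e'
    · exact Or.inl hve'.symm
    have hlt : ordD e' < ordD v := lt_of_le_of_ne hov fun h => hve' (hinj h.symm)
    have hvs : v ≠ s := fun h => absurd (h ▸ hlt) (fun hh => (lt_asymm hh) ho1)
    rcases hv with h | ⟨w, hw, hwe⟩
    · exact absurd h.symm hvs
    · rcases L3 w hw with hU'w | hrt
      · by_cases hwe' : w = e'
        · exact Or.inr ⟨w, by rw [hwe'], hwe⟩
        · have hvU' := clU' w v hU'w hwe' hwe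
          exact absurd ((hU' v).mp hvU').2 (not_le.mpr hlt)
      · exact Or.inr ⟨w, hrt, hwe⟩
  -- vertices of U above e' reach e avoiding e' internally
  have hC : ∀ v, ReachWithout E e s v → ordD e' ≤ ordD v → CoReachWithout E e' v e := by
    intro v hv hov
    by_cases hve : v = e
    · exact Or.inl hve
    rcases (hM1 v).mp hv with h | ⟨w, hvw, hrt⟩
    · exact absurd h hve
    · exact Or.inr ⟨w, hvw, rtg_liftFst htopo (lt_of_le_of_lt hov (htopo _ _ hvw))
        (Relation.ReflTransGen.mono (fun a b hab => hab.1) _ _ hrt)⟩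
  -- backward: CoReachWithout E e' v e forces v ∈ U with ordD e' ≤ ordD v
  have hB : ∀ v, CoReachWithout E e' v e → ReachWithout E e s v ∧ ordD e' ≤ ordD v := by
    intro v hc
    rcases hc with rfl | ⟨w, hvw, hrt⟩
    · exact ⟨heU, ho2.le⟩
    · have hwU : ReachWithout E e s w := L2 w hrt
      have hws : w ≠ s := fun h => L1 w hrt (h ▸ (Or.inl rfl))
      have hvU : ReachWithout E e s v := coclU v w hwU hws hvw
      refine ⟨hvU, ?_⟩
      by_contra hlt
      push_neg at hlt
      have hvU' : ReachWithout E e' s v := (hU' v).mpr ⟨((hU v).mp hvU).1, hlt.le⟩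
      have hve' : v ≠ e' := fun h => lt_irrefl _ (h ▸ hlt)
      exact L1 w hrt (clU' v w hvU' hve' hvw)
  -- forward: ReachWithout E e e' v forces v ∈ U with ordD e' ≤ ordD v
  have hF : ∀ v, ReachWithout E e e' v → ReachWithout E e s v ∧ ordD e' ≤ ordD v := by
    intro v hr
    rcases hr with rfl | ⟨w, hrt, hwv⟩
    · exact ⟨he'U, le_rfl⟩
    · have key : ∀ x, Relation.ReflTransGen (fun a b => E a b ∧ b ≠ e) e' x →
          ReachWithout E e s x ∧ x ≠ e := by
        intro x hx
        induction hx with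
        | refl => exact ⟨he'U, hne'e⟩
        | tail _ h₂ ih => exact ⟨clU _ _ ih.1 ih.2 h₂.1, h₂.2⟩
      obtain ⟨hwU, hwne⟩ := key w hrt
      have h1 : ordD e' ≤ ordD w := ord_le_of_rtg htopo (fun a b h => h.1) hrt
      exact ⟨clU w v hwU hwne hwv, h1.trans (htopo _ _ hwv).le⟩
  refine ⟨hne'e, hTe'e, fun v => ⟨fun h => ?_, fun h => ?_⟩, fun v h => ?_⟩
  · obtain ⟨ha, hb⟩ := hF v h
    exact hC v ha hb
  · obtain ⟨ha, hb⟩ := hB v h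
    exact hR v ha hb
  · exact hA v (Relation.TransGen.mono (fun a b hab => hab.1) _ _ h)
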